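/- Let 𝔄 be a finite-dimensional associative algebra, F ∈ 𝔄*, and suppose the symmetric form Q_F(a,b) = F(ab) on Stab_F is non-degenerate. Then the maximal power of (λ+μ) dividing χ(λ,μ,F) = det(λ A_F + μ A_Fᵀ) equals dim Stab_F. -/

import Mathlib

open Matrix MvPolynomial

section CPEPaux
open Polynomial

lemma gram_entry {k : Type*} [CommRing k] {n : ℕ} {ι : Type*} [Fintype ι]
    (M : Matrix (Fin n) (Fin n) k)
    (σ : ι ≃ Fin n) (eb : ι → (Fin n → k)) (P : Matrix ι ι k)
    (hP : ∀ i j, P i j = eb j (σ i)) (i j : ι) :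
    (Pᵀ * M.submatrix σ σ * P) i j = eb i ⬝ᵥ M.mulVec (eb j) := by
  simp only [Matrix.mul_apply, Matrix.transpose_apply, Matrix.submatrix_apply, hP,
    dotProduct, Matrix.mulVec, Finset.sum_mul, Finset.mul_sum]
  rw [Finset.sum_comm]
  refine Fintype.sum_equiv σ _ _ fun y => ?_
  refine Fintype.sum_equiv σ _ _ fun x => by ring


lemma det_map' {R S : Type*} [CommRing R] [CommRing S] {n : Type*} [Fintype n] [DecidableEq n]
    (f : R →+* S) (M : Matrix n n R) : (M.map f).det = f M.det := by
  rw [← RingHom.mapMatrix_apply, ← RingHom.map_det]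

lemma dotProduct_sum' {k : Type*} [CommRing k] {n ι : Type*} [Fintype n] [Fintype ι]
    (a : n → k) (x : ι → n → k) : a ⬝ᵥ (∑ j, x j) = ∑ j, a ⬝ᵥ x j := by
  simp only [dotProduct, Finset.sum_apply, Finset.mul_sum]
  exact Finset.sum_comm

lemma sum_dotProduct' {k : Type*} [CommRing k] {n ι : Type*} [Fintype n] [Fintype ι]
    (a : n → k) (x : ι → n → k) : (∑ j, x j) ⬝ᵥ a = ∑ j, x j ⬝ᵥ a := by
  simp only [dotProduct, Finset.sum_apply, Finset.sum_mul]
  exact Finset.sum_comm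

lemma expand_right {k : Type*} [CommRing k] {n : Type*} {ι : Type*} [Fintype n] [Fintype ι]
    [DecidableEq n] (A : Matrix n n k) (a : n → k) (w : ι → k) (e : ι → n → k) :
    a ⬝ᵥ A.mulVec (∑ j, w j • e j) = ∑ j, w j * (a ⬝ᵥ A.mulVec (e j)) := by
  have h1 : A.mulVec (∑ j, w j • e j) = ∑ j, w j • A.mulVec (e j) := by
    simp only [← Matrix.mulVecLin_apply, map_sum, LinearMap.map_smul]
  rw [h1, dotProduct_sum']
  exact Finset.sum_congr rfl fun j _ => by rw [dotProduct_smul, smul_eq_mul]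

lemma expand_left {k : Type*} [CommRing k] {n : Type*} {ι : Type*} [Fintype n] [Fintype ι]
    (v : ι → k) (e : ι → n → k) (u : n → k) :
    (∑ i, v i • e i) ⬝ᵥ u = ∑ i, v i * (e i ⬝ᵥ u) := by
  rw [sum_dotProduct']
  exact Finset.sum_congr rfl fun i _ => by rw [smul_dotProduct, smul_eq_mul]

set_option maxHeartbeats 1000000 in
lemma heart {k : Type*} [Field k] {n : ℕ} (A : Matrix (Fin n) (Fin n) k)
    (hnd : ∀ u ∈ LinearMap.ker (Aᵀ - A).mulVecLin,
      (∀ v ∈ LinearMap.ker (Aᵀ - A).mulVecLin, u ⬝ᵥ A.mulVec v = 0) → u = 0) :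
    ∃ q : Polynomial (Polynomial k), ¬ (Polynomial.X ∣ q) ∧
      ((Polynomial.X : Polynomial (Polynomial k)) • A.map (fun a => Polynomial.C (Polynomial.C a))
        + Polynomial.C (Polynomial.X : Polynomial k) •
          (Aᵀ - A).map fun a => Polynomial.C (Polynomial.C a)).det
      = Polynomial.X ^ (Module.finrank k (LinearMap.ker (Aᵀ - A).mulVecLin)) * q := by
  set B := Aᵀ - A with hB
  set K := LinearMap.ker B.mulVecLin with hKdef
  obtain ⟨K', hcompl⟩ := Submodule.exists_isCompl K
  set d := Module.finrank k K with hd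
  set r := Module.finrank k K' with hr
  have hcard : r + d = n := by
    have h1 := Submodule.finrank_add_eq_of_isCompl hcompl.symm
    have h2 : Module.finrank k (Fin n → k) = n := by simp
    omega
  set bK := Module.finBasis k K with hbK
  set bK' := Module.finBasis k K' with hbK'
  set eb : Module.Basis (Fin r ⊕ Fin d) k (Fin n → k) :=
    (bK'.prod bK).map (Submodule.prodEquivOfIsCompl K' K hcompl.symm) with heb
  have heb_inl : ∀ i, eb (Sum.inl i) = (bK' i : Fin n → k) := by
    intro i
    simp [heb, Module.Basis.map_apply, Submodule.coe_prodEquivOfIsCompl']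
  have heb_inr : ∀ i, eb (Sum.inr i) = (bK i : Fin n → k) := by
    intro i
    simp [heb, Module.Basis.map_apply, Submodule.coe_prodEquivOfIsCompl']
  have heb_inr_mem : ∀ i, eb (Sum.inr i) ∈ K := by
    intro i; rw [heb_inr]; exact (bK i).2
  have heb_inl_mem : ∀ i, eb (Sum.inl i) ∈ K' := by
    intro i; rw [heb_inl]; exact (bK' i).2
  have hspan : ∀ v ∈ K, ∃ w : Fin d → k, v = ∑ i, w i • eb (Sum.inr i) := by
    intro v hv
    refine ⟨fun i => bK.repr ⟨v, hv⟩ i, ?_⟩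
    have := bK.sum_repr ⟨v, hv⟩
    have h2 := congrArg (Submodule.subtype K) this
    simp only [map_sum, _root_.map_smul, Submodule.coe_subtype] at h2
    exact h2.symm.trans (Finset.sum_congr rfl fun i _ => by rw [heb_inr])
  have hindr : ∀ w : Fin d → k, ∑ i, w i • eb (Sum.inr i) = 0 → w = 0 := by
    intro w hw
    have hli := (eb.linearIndependent.comp Sum.inr Sum.inr_injective)
    have := Fintype.linearIndependent_iff.mp hli w hw
    funext i; exact this i
  have hindl : ∀ w : Fin r → k, ∑ i, w i • eb (Sum.inl i) = 0 → w = 0 := by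
    intro w hw
    have hli := (eb.linearIndependent.comp Sum.inl Sum.inl_injective)
    have := Fintype.linearIndependent_iff.mp hli w hw
    funext i; exact this i
  -- the change-of-basis matrix
  set σ : (Fin r ⊕ Fin d) ≃ Fin n := finSumFinEquiv.trans (finCongr hcard) with hσ
  set cb : Module.Basis (Fin r ⊕ Fin d) k (Fin n → k) := (Pi.basisFun k (Fin n)).reindex σ.symm with hc
  set P := cb.toMatrix eb with hPdef
  have hP : ∀ i j, P i j = eb j (σ i) := by
    intro i j
    rw [hPdef, Module.Basis.toMatrix_apply, hc, Module.Basis.repr_reindex_apply]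
    simp
  have hPunit : IsUnit P.det :=
    Matrix.isUnit_det_of_right_inverse (Module.Basis.toMatrix_mul_toMatrix_flip cb eb)
  set G := Pᵀ * A.submatrix σ σ * P with hGdef
  set H := Pᵀ * B.submatrix σ σ * P with hHdef
  have hG : ∀ i j, G i j = eb i ⬝ᵥ A.mulVec (eb j) := gram_entry A σ eb P hP
  have hH : ∀ i j, H i j = eb i ⬝ᵥ B.mulVec (eb j) := gram_entry B σ eb P hP
  -- kernel rows/columns of H
  have hHc : ∀ i j, H i (Sum.inr j) = 0 := by
    intro i j
    rw [hH]
    have : B.mulVec (eb (Sum.inr j)) = 0 := heb_inr_mem j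
    rw [this, dotProduct_zero]
  have hHr : ∀ i j, H (Sum.inr i) j = 0 := by
    intro i j
    rw [hH, Matrix.dotProduct_mulVec]
    have h1 : Bᵀ = -B := by rw [hB]; simp [Matrix.transpose_sub]
    have h2 : Matrix.vecMul (eb (Sum.inr i)) B = 0 := by
      rw [← Matrix.mulVec_transpose, h1, Matrix.neg_mulVec]
      have : B.mulVec (eb (Sum.inr i)) = 0 := heb_inr_mem i
      rw [this, neg_zero]
    rw [h2, zero_dotProduct]
  -- nondegeneracy of G22
  have hG22 : (Matrix.of fun i j => G (Sum.inr i) (Sum.inr j)).det ≠ 0 := by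
    intro hdet
    set G22 := Matrix.of fun i j => G (Sum.inr i) (Sum.inr j) with hG22def
    have hdetT : (G22ᵀ).det = 0 := by rw [Matrix.det_transpose]; exact hdet
    obtain ⟨v, hv0, hv⟩ := Matrix.exists_mulVec_eq_zero_iff.mpr hdetT
    set a := ∑ i, v i • eb (Sum.inr i) with ha
    have haK : a ∈ K := Submodule.sum_smul_mem _ _ fun i _ => heb_inr_mem i
    have key : ∀ c ∈ K, a ⬝ᵥ A.mulVec c = 0 := by
      intro c hc
      obtain ⟨w, rfl⟩ := hspan c hc
      rw [expand_right]
      have h2 : ∀ j, a ⬝ᵥ A.mulVec (eb (Sum.inr j)) = 0 := by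
        intro j
        rw [ha, expand_left]
        have h3 := congrFun hv j
        simp only [Matrix.mulVec, dotProduct, Matrix.transpose_apply, Pi.zero_apply] at h3
        rw [← h3]
        refine Finset.sum_congr rfl fun i _ => ?_
        rw [hG22def]
        simp [hG, mul_comm]
      simp [h2]
    have ha0 : a = 0 := hnd a haK key
    exact hv0 (hindr v ha0)
  -- nondegeneracy of H11
  have hH11 : (Matrix.of fun i j => H (Sum.inl i) (Sum.inl j)).det ≠ 0 := by
    intro hdet
    set H11 := Matrix.of fun i j => H (Sum.inl i) (Sum.inl j) with hH11def
    obtain ⟨u, hu0, hu⟩ := Matrix.exists_mulVec_eq_zero_iff.mpr hdet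
    set w := ∑ i, u i • eb (Sum.inl i) with hw
    have hbasis0 : ∀ t, eb t ⬝ᵥ B.mulVec w = 0 := by
      intro t
      have expand : eb t ⬝ᵥ B.mulVec w = ∑ i, u i * H t (Sum.inl i) := by
        rw [hw, expand_right]
        exact Finset.sum_congr rfl fun i _ => by rw [hH]
      rw [expand]
      cases t with
      | inl s =>
        have h3 := congrFun hu s
        simp only [Matrix.mulVec, dotProduct, Pi.zero_apply] at h3
        rw [← h3]
        exact Finset.sum_congr rfl fun i _ => mul_comm _ _
      | inr s => simp [hHr]
    have hall : ∀ t : Fin n → k, t ⬝ᵥ B.mulVec w = 0 := by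
      intro t
      have ht := eb.sum_repr t
      have h4 : ∀ z : Fin n → k, t ⬝ᵥ z = ∑ i, eb.repr t i * (eb i ⬝ᵥ z) := by
        intro z
        conv_lhs => rw [← ht]
        rw [expand_left]
      rw [h4]
      simp [hbasis0]
    have hwK : w ∈ K := by
      rw [hKdef, LinearMap.mem_ker, Matrix.mulVecLin_apply]
      funext s
      have := hall (Pi.single s 1)
      simpa [dotProduct, Pi.single_apply, Finset.sum_ite_eq'] using this
    have hwK' : w ∈ K' := Submodule.sum_smul_mem _ _ fun i _ => heb_inl_mem i
    have hw0 : w = 0 := by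
      have := hcompl.disjoint
      exact Submodule.disjoint_def.mp this w hwK hwK'
    exact hu0 (hindl u hw0)
  -- move to R := Polynomial (Polynomial k)
  set φ : k →+* Polynomial (Polynomial k) := Polynomial.C.comp Polynomial.C with hφ
  set MR : Matrix (Fin n) (Fin n) (Polynomial (Polynomial k)) :=
    (Polynomial.X : Polynomial (Polynomial k)) • A.map (fun a => Polynomial.C (Polynomial.C a))
      + Polynomial.C (Polynomial.X : Polynomial k) •
        B.map (fun a => Polynomial.C (Polynomial.C a)) with hMR
  set PR := P.map φ with hPR
  set E := PRᵀ * MR.submatrix σ σ * PR with hE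
  have hEeq : E = (Polynomial.X : Polynomial (Polynomial k)) • G.map φ
      + Polynomial.C (Polynomial.X : Polynomial k) • H.map φ := by
    have hsub : MR.submatrix σ σ
        = (Polynomial.X : Polynomial (Polynomial k)) • (A.submatrix σ σ).map φ
          + Polynomial.C (Polynomial.X : Polynomial k) • (B.submatrix σ σ).map φ := by
      ext i j
      simp [hMR, hφ, Matrix.submatrix_apply, Matrix.map_apply]
    rw [hE, hsub, Matrix.mul_add, Matrix.add_mul]
    refine congrArg₂ (· + ·) ?_ ?_
    · rw [Matrix.mul_smul, Matrix.smul_mul, hGdef, hPR, ← Matrix.transpose_map,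
        ← Matrix.map_mul, ← Matrix.map_mul]
    · rw [Matrix.mul_smul, Matrix.smul_mul, hHdef, hPR, ← Matrix.transpose_map,
        ← Matrix.map_mul, ← Matrix.map_mul]
  have hdetE : E.det = PR.det * PR.det * MR.det := by
    rw [hE, Matrix.det_mul, Matrix.det_mul, Matrix.det_transpose,
      Matrix.det_submatrix_equiv_self]
    ring
  set D : Matrix (Fin r ⊕ Fin d) (Fin r ⊕ Fin d) (Polynomial (Polynomial k)) :=
    Matrix.diagonal (Sum.elim (fun _ => 1) fun _ => Polynomial.X) with hD
  set N2 : Matrix (Fin r ⊕ Fin d) (Fin r ⊕ Fin d) (Polynomial (Polynomial k)) :=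
    Matrix.of fun i j =>
      Sum.elim (fun l => E i (Sum.inl l)) (fun l => φ (G i (Sum.inr l))) j with hN2
  have hfac : N2 * D = E := by
    ext i j
    rw [Matrix.mul_diagonal]
    cases j with
    | inl l => simp [hN2, hD]
    | inr l =>
      rw [hEeq]
      simp only [hN2, Matrix.of_apply, Sum.elim_inr, hD, Matrix.add_apply, Matrix.smul_apply,
        Matrix.map_apply, hHc, map_zero, smul_eq_mul, mul_zero, add_zero]
      rw [mul_comm]
  have hdetD : D.det = Polynomial.X ^ d := by
    rw [hD, Matrix.det_diagonal, Fintype.prod_sum_type]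
    simp
  have hdetfac : E.det = N2.det * Polynomial.X ^ d := by
    rw [← hfac, Matrix.det_mul, hdetD]
  set ev0 : Polynomial (Polynomial k) →+* Polynomial k := Polynomial.evalRingHom 0 with hev0
  have hM0 : (N2.map ev0) = Matrix.fromBlocks
      ((Polynomial.X : Polynomial k) •
        (Matrix.of fun i j => H (Sum.inl i) (Sum.inl j)).map Polynomial.C)
      ((Matrix.of fun i j => G (Sum.inl i) (Sum.inr j)).map Polynomial.C)
      0
      ((Matrix.of fun i j => G (Sum.inr i) (Sum.inr j)).map Polynomial.C) := by
    ext i j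
    cases i <;> cases j <;>
      simp [hN2, hEeq, hev0, hφ, Matrix.map_apply, Matrix.add_apply, Matrix.smul_apply,
        smul_eq_mul, hHr]
  have hdetM0 : (N2.map ev0).det ≠ 0 := by
    rw [hM0, Matrix.det_fromBlocks_zero₂₁]
    apply mul_ne_zero
    · rw [Matrix.det_smul]
      apply mul_ne_zero (pow_ne_zero _ Polynomial.X_ne_zero)
      rw [_root_.det_map']
      simpa using hH11
    · rw [_root_.det_map']
      simpa using hG22
  have hX : ¬ ((Polynomial.X : Polynomial (Polynomial k)) ∣ N2.det) := by
    rintro ⟨q, hq⟩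
    apply hdetM0
    rw [_root_.det_map', hq, _root_.map_mul]
    simp [hev0]
  obtain ⟨uu, huu⟩ := hPunit
  have hPRdet : PR.det = φ P.det := by rw [hPR, _root_.det_map']
  set vi := φ ((uu⁻¹ : kˣ) : k) with hvi
  have hvi1 : vi * PR.det = 1 := by
    rw [hPRdet, hvi, ← _root_.map_mul, ← huu, Units.inv_mul, _root_.map_one]
  refine ⟨vi * vi * N2.det, ?_, ?_⟩
  · intro hdvd
    apply hX
    have h1 : φ P.det * vi = 1 := by rw [← hPRdet, mul_comm]; exact hvi1
    have h3 : N2.det = (φ P.det * φ P.det) * (vi * vi * N2.det) := by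
      calc N2.det = (φ P.det * vi) * (φ P.det * vi) * N2.det := by rw [h1]; ring
      _ = (φ P.det * φ P.det) * (vi * vi * N2.det) := by ring
    rw [h3]
    exact hdvd.mul_left _
  · have h1 : PR.det * vi = 1 := by rw [mul_comm]; exact hvi1
    calc MR.det = (PR.det * vi) * (PR.det * vi) * MR.det := by rw [h1]; ring
    _ = (vi * vi) * E.det := by rw [hdetE]; ring
    _ = (vi * vi) * (N2.det * Polynomial.X ^ d) := by rw [hdetfac]
    _ = Polynomial.X ^ d * (vi * vi * N2.det) := by ring


end CPEPaux

/-- If the symmetric form `Q_F(a,b) = F(ab)` on `Stab_F` is non-degenerate, then the maximal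
power of `(λ+μ)` dividing `χ(λ,μ,F) = det (λ A_F + μ A_Fᵀ)` equals `dim Stab_F`. -/
theorem char_poly_exact_power {k 𝔄 : Type*} [Field k] [NonUnitalRing 𝔄] [Module k 𝔄]
    [SMulCommClass k 𝔄 𝔄] [IsScalarTower k 𝔄 𝔄] [FiniteDimensional k 𝔄]
    {n : ℕ} (b : Module.Basis (Fin n) k 𝔄) (F : Module.Dual k 𝔄)
    (S : Submodule k 𝔄) (hS : ∀ a : 𝔄, a ∈ S ↔ ∀ x : 𝔄, F (a * x) = F (x * a))
    (hnondeg : ∀ a ∈ S, (∀ c ∈ S, F (a * c) = 0) → a = 0)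
    (AF : Matrix (Fin n) (Fin n) k) (hAF : ∀ i j, AF i j = F (b i * b j))
    (χ : MvPolynomial (Fin 2) k)
    (hχ : χ = Matrix.det ((X 0 : MvPolynomial (Fin 2) k) •
          AF.map (MvPolynomial.C : k → MvPolynomial (Fin 2) k)
        + (X 1 : MvPolynomial (Fin 2) k) •
          AFᵀ.map (MvPolynomial.C : k → MvPolynomial (Fin 2) k))) :
    (X 0 + X 1 : MvPolynomial (Fin 2) k) ^ (Module.finrank k S) ∣ χ ∧
    ¬ ((X 0 + X 1 : MvPolynomial (Fin 2) k) ^ (Module.finrank k S + 1) ∣ χ) := by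
  classical
  set K := LinearMap.ker (AFᵀ - AF).mulVecLin with hK
  -- the pairing formula
  have hpair : ∀ a c : 𝔄, F (a * c) = (b.equivFun a) ⬝ᵥ AF.mulVec (b.equivFun c) := by
    intro a c
    have h1 : F (a * c) = ∑ i, b.equivFun a i * ∑ j, b.equivFun c j * AF i j := by
      conv_lhs => rw [← b.sum_equivFun a]
      rw [Finset.sum_mul, map_sum]
      refine Finset.sum_congr rfl fun i _ => ?_
      rw [smul_mul_assoc, _root_.map_smul, smul_eq_mul]
      congr 1
      conv_lhs => rw [← b.sum_equivFun c]
      rw [Finset.mul_sum, map_sum]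
      refine Finset.sum_congr rfl fun j _ => ?_
      rw [mul_smul_comm, _root_.map_smul, smul_eq_mul, hAF]
    rw [h1]
    simp only [dotProduct, Matrix.mulVec]
    refine Finset.sum_congr rfl fun i _ => ?_
    rw [Finset.mul_sum, Finset.mul_sum]
    exact Finset.sum_congr rfl fun j _ => by ring
  have hAFr : ∀ (a : 𝔄) (j : Fin n), F (a * b j) = AFᵀ.mulVec (b.equivFun a) j := by
    intro a j
    rw [hpair]
    simp only [dotProduct, Matrix.mulVec, Matrix.transpose_apply, Module.Basis.equivFun_self,
      mul_ite, mul_one, mul_zero, Finset.sum_ite_eq]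
    simp [mul_comm]
  have hAFl : ∀ (a : 𝔄) (j : Fin n), F (b j * a) = AF.mulVec (b.equivFun a) j := by
    intro a j
    rw [hpair]
    simp only [dotProduct, Matrix.mulVec, Module.Basis.equivFun_self, ite_mul, one_mul,
      zero_mul, Finset.sum_ite_eq]
    simp
  -- membership translation
  have hmem : ∀ a : 𝔄, a ∈ S ↔ b.equivFun a ∈ K := by
    intro a
    rw [hS, hK, LinearMap.mem_ker, Matrix.mulVecLin_apply]
    constructor
    · intro h
      funext j
      have h1 := h (b j)
      rw [hAFr, hAFl] at h1
      rw [Matrix.sub_mulVec]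
      simpa [sub_eq_zero] using h1
    · intro h x
      have hker : ∀ j, AFᵀ.mulVec (b.equivFun a) j = AF.mulVec (b.equivFun a) j := by
        intro j
        have h2 := congrFun h j
        rw [Matrix.sub_mulVec] at h2
        simpa [sub_eq_zero] using h2
      have hLM : (F ∘ₗ LinearMap.mulLeft k a) = (F ∘ₗ LinearMap.mulRight k a) := by
        apply b.ext
        intro j
        simp only [LinearMap.comp_apply, LinearMap.mulLeft_apply, LinearMap.mulRight_apply]
        rw [hAFr, hAFl]
        exact hker j
      have h3 := LinearMap.congr_fun hLM x
      simpa using h3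
  have hKmap : Submodule.map (b.equivFun : 𝔄 →ₗ[k] (Fin n → k)) S = K := by
    ext u
    rw [Submodule.mem_map]
    constructor
    · rintro ⟨a, ha, rfl⟩
      exact (hmem a).mp ha
    · intro hu
      refine ⟨b.equivFun.symm u, ?_, ?_⟩
      · rw [hmem, LinearEquiv.apply_symm_apply]
        exact hu
      · exact b.equivFun.apply_symm_apply u
  have hfr : Module.finrank k K = Module.finrank k S := by
    rw [← hKmap]
    exact LinearEquiv.finrank_map_eq b.equivFun S
  have hnd' : ∀ u ∈ K, (∀ v ∈ K, u ⬝ᵥ AF.mulVec v = 0) → u = 0 := by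
    intro u hu h0
    have haS : b.equivFun.symm u ∈ S := by
      rw [hmem, LinearEquiv.apply_symm_apply]
      exact hu
    have ha0 : b.equivFun.symm u = 0 := by
      refine hnondeg _ haS fun c hc => ?_
      rw [hpair]
      simp only [LinearEquiv.apply_symm_apply]
      exact h0 _ ((hmem c).mp hc)
    rw [← b.equivFun.apply_symm_apply u, ha0, _root_.map_zero]
  obtain ⟨q, hq, hdet⟩ := heart AF hnd'
  rw [hfr] at hdet
  -- change of variables
  set Φ : MvPolynomial (Fin 2) k →ₐ[k] Polynomial (Polynomial k) :=
    MvPolynomial.aeval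
      ![Polynomial.X - Polynomial.C Polynomial.X, Polynomial.C Polynomial.X] with hΦ
  have hΦ0 : Φ (X 0) = Polynomial.X - Polynomial.C Polynomial.X := by simp [hΦ]
  have hΦ1 : Φ (X 1) = Polynomial.C Polynomial.X := by simp [hΦ]
  have hΦχ : Φ χ = ((Polynomial.X : Polynomial (Polynomial k)) •
      AF.map (fun a => Polynomial.C (Polynomial.C a))
        + Polynomial.C (Polynomial.X : Polynomial k) •
          (AFᵀ - AF).map fun a => Polynomial.C (Polynomial.C a)).det := by
    rw [hχ, AlgHom.map_det]
    congr 1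
    refine Matrix.ext fun i j => ?_
    simp only [AlgHom.mapMatrix_apply, RingHom.mapMatrix_apply, AlgHom.toRingHom_eq_coe,
      Matrix.map_apply,
      Matrix.add_apply, Matrix.smul_apply, smul_eq_mul, _root_.map_add, _root_.map_mul,
      hΦ0, hΦ1, Matrix.transpose_apply, Matrix.sub_apply, map_sub]
    have hC : ∀ a : k, Φ (MvPolynomial.C a) = Polynomial.C (Polynomial.C a) := by
      intro a
      rw [hΦ]
      simp [MvPolynomial.aeval_C, Polynomial.algebraMap_apply, Algebra.algebraMap_self_apply]
    rw [hC, hC]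
    ring
  set ψ1 : Polynomial k →+* MvPolynomial (Fin 2) k :=
    (Polynomial.aeval (X 1 : MvPolynomial (Fin 2) k)).toRingHom with hψ1
  set Ψ : Polynomial (Polynomial k) →+* MvPolynomial (Fin 2) k :=
    Polynomial.eval₂RingHom ψ1 (X 0 + X 1) with hΨ
  have hΨX : Ψ Polynomial.X = X 0 + X 1 := by
    rw [hΨ, Polynomial.coe_eval₂RingHom, Polynomial.eval₂_X]
  have hΨΦ : ∀ p, Ψ (Φ p) = p := by
    have hcomp : Ψ.comp (Φ : MvPolynomial (Fin 2) k →+* Polynomial (Polynomial k))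
        = RingHom.id _ := by
      apply MvPolynomial.ringHom_ext
      · intro a
        have hC : Φ (MvPolynomial.C a) = Polynomial.C (Polynomial.C a) := by
          rw [hΦ]
          simp [MvPolynomial.aeval_C, Polynomial.algebraMap_apply, Algebra.algebraMap_self_apply]
        simp only [RingHom.comp_apply, RingHom.id_apply, RingHom.coe_coe, hC, hΨ,
          Polynomial.coe_eval₂RingHom, Polynomial.eval₂_C, hψ1]
        simp
      · rw [Fin.forall_fin_two]
        constructor
        · simp only [RingHom.comp_apply, RingHom.id_apply, RingHom.coe_coe,
            hΨ, Polynomial.coe_eval₂RingHom, hψ1]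
          rw [hΦ0, Polynomial.eval₂_sub, Polynomial.eval₂_X, Polynomial.eval₂_C]
          simp
        · simp only [RingHom.comp_apply, RingHom.id_apply, RingHom.coe_coe,
            hΨ, Polynomial.coe_eval₂RingHom, hψ1]
          rw [hΦ1, Polynomial.eval₂_C]
          simp
    intro p
    have h4 := RingHom.congr_fun hcomp p
    simpa using h4
  constructor
  · have hχ2 : χ = Ψ (Φ χ) := (hΨΦ χ).symm
    rw [hχ2, hΦχ, hdet, _root_.map_mul, map_pow, hΨX]
    exact Dvd.intro _ rfl
  · intro hdvd
    have h2 := _root_.map_dvd Φ hdvd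
    rw [map_pow, _root_.map_add, hΦ0, hΦ1, sub_add_cancel, hΦχ, hdet, pow_succ] at h2
    exact hq ((mul_dvd_mul_iff_left (pow_ne_zero _ Polynomial.X_ne_zero)).mp h2)
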